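/- Let n ≥ 5 be a natural number and ρ ∈ [0,1]. Then the Bernoulli product measure ν_ρ^n is invariant for the DEP generator on the torus ℤ/nℤ: for every function f : {0,1}^{ℤ/nℤ} → ℝ, ∑_{η ∈ {0,1}^{ℤ/nℤ}} ν_ρ^n(η) · (L_n f)(η) = 0. -/

import Mathlib

/-- The configuration obtained from `η` by exchanging the values at sites `x` and `y`. -/
def torusSwap {n : ℕ} (η : ZMod n → Fin 2) (x y : ZMod n) : ZMod n → Fin 2 :=
  fun z => if z = x then η y else if z = y then η x else η z

/-- The DEP generator on the torus `ℤ/nℤ`. -/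
def torusGen {n : ℕ} [NeZero n] (f : (ZMod n → Fin 2) → ℝ) (η : ZMod n → Fin 2) : ℝ :=
  ∑ x : ZMod n,
    ((f (torusSwap η x (x + 1)) - f η) +
      if η x = η (x + 1) then f (torusSwap η x (x + 2)) - f η else 0)

/-- The Bernoulli product weight `ν_ρ^n(η) = ∏_x ρ^{η(x)} (1-ρ)^{1-η(x)}`. -/
def bernoulliWeight {n : ℕ} [NeZero n] (ρ : ℝ) (η : ZMod n → Fin 2) : ℝ :=
  ∏ x : ZMod n, ρ ^ (η x : ℕ) * (1 - ρ) ^ (1 - (η x : ℕ))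

lemma torusSwap_involutive {n : ℕ} (x y : ZMod n) :
    Function.Involutive (fun η : ZMod n → Fin 2 => torusSwap η x y) := by
  intro η; funext z
  simp only [torusSwap]
  split_ifs with h1 h2 <;> simp_all [torusSwap]

lemma torusSwap_torusSwap {n : ℕ} (η : ZMod n → Fin 2) (x y : ZMod n) :
    torusSwap (torusSwap η x y) x y = η :=
  torusSwap_involutive x y η

lemma torusSwap_eq_comp {n : ℕ} (η : ZMod n → Fin 2) (x y : ZMod n) (z : ZMod n) :
    torusSwap η x y z = η (Equiv.swap x y z) := by
  simp only [torusSwap, Equiv.swap_apply_def]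
  split_ifs <;> rfl

lemma weight_swap {n : ℕ} [NeZero n] (ρ : ℝ) (η : ZMod n → Fin 2) (x y : ZMod n) :
    bernoulliWeight ρ (torusSwap η x y) = bernoulliWeight ρ η := by
  unfold bernoulliWeight
  exact Fintype.prod_equiv (Equiv.swap x y) _ _ (fun z => by rw [torusSwap_eq_comp])

lemma sum_swap_reindex {n : ℕ} [NeZero n] (x y : ZMod n) (F : (ZMod n → Fin 2) → ℝ) :
    ∑ η : ZMod n → Fin 2, F (torusSwap η x y) = ∑ η : ZMod n → Fin 2, F η :=
  Equiv.sum_comp ((torusSwap_involutive x y).toPerm _) F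

lemma ite_sub_zero {c : Prop} [Decidable c] (a b : ℝ) :
    (if c then a - b else 0) = (if c then a else 0) - (if c then b else 0) := by
  split_ifs <;> simp

/-- The Bernoulli product measure `ν_ρ^n` is invariant for DEP on the torus `ℤ/nℤ`, `n ≥ 5`. -/
theorem dep_bernoulli_invariant (n : ℕ) [NeZero n] (hn : 5 ≤ n)
    (ρ : ℝ) (hρ0 : 0 ≤ ρ) (hρ1 : ρ ≤ 1)
    (f : (ZMod n → Fin 2) → ℝ) :
    ∑ η : ZMod n → Fin 2, bernoulliWeight ρ η * torusGen f η = 0 := by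
  classical
  have hdvd : ∀ k : ℕ, 0 < k → k < n → ((k : ZMod n) ≠ 0) := by
    intro k hk hkn h
    have := (ZMod.natCast_eq_zero_iff k n).mp h
    have := Nat.le_of_dvd hk this
    omega
  have h10 : (1 : ZMod n) ≠ 0 := by
    have := hdvd 1 one_pos (by omega); exact_mod_cast this
  have h20 : (2 : ZMod n) ≠ 0 := by
    have := hdvd 2 two_pos (by omega); exact_mod_cast this
  have hx1 : ∀ x : ZMod n, x + 1 ≠ x := by
    intro x h
    apply h10
    have : x + 1 = x + 0 := by simpa using h
    exact add_left_cancel this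
  have hx12 : ∀ x : ZMod n, x + 1 ≠ x + 2 := by
    intro x h
    apply h10
    have h2 : (1 : ZMod n) = 2 := add_left_cancel h
    linear_combination -h2
  have hx2 : ∀ x : ZMod n, x + 2 ≠ x := by
    intro x h
    apply h20
    have : x + 2 = x + 0 := by simpa using h
    exact add_left_cancel this
  -- expand and exchange sums
  have expand :
      ∑ η : ZMod n → Fin 2, bernoulliWeight ρ η * torusGen f η =
      ∑ x : ZMod n, ∑ η : ZMod n → Fin 2,
        ((bernoulliWeight ρ η * f (torusSwap η x (x + 1)) - bernoulliWeight ρ η * f η) +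
          ((if η x = η (x + 1) then bernoulliWeight ρ η * f (torusSwap η x (x + 2)) else 0) -
            (if η x = η (x + 1) then bernoulliWeight ρ η * f η else 0))) := by
    rw [Finset.sum_comm]
    refine Finset.sum_congr rfl fun η _ => ?_
    simp only [torusGen, Finset.mul_sum]
    refine Finset.sum_congr rfl fun x _ => ?_
    rw [mul_add, mul_sub, mul_ite, mul_zero, mul_sub, ite_sub_zero]
  rw [expand]
  have key1 : ∀ x : ZMod n,
      ∑ η : ZMod n → Fin 2, bernoulliWeight ρ η * f (torusSwap η x (x + 1)) =
      ∑ η : ZMod n → Fin 2, bernoulliWeight ρ η * f η := by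
    intro x
    rw [← sum_swap_reindex x (x + 1) (fun η => bernoulliWeight ρ η * f η)]
    refine Finset.sum_congr rfl fun η _ => ?_
    rw [weight_swap]
  have key2 : ∀ x : ZMod n,
      ∑ η : ZMod n → Fin 2,
          (if η x = η (x + 1) then bernoulliWeight ρ η * f (torusSwap η x (x + 2)) else 0) =
      ∑ η : ZMod n → Fin 2,
          (if η (x + 2) = η (x + 1) then bernoulliWeight ρ η * f η else 0) := by
    intro x
    rw [← sum_swap_reindex x (x + 2)
      (fun η => if η (x + 2) = η (x + 1) then bernoulliWeight ρ η * f η else 0)]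
    refine Finset.sum_congr rfl fun η _ => ?_
    have e2 : torusSwap η x (x + 2) (x + 2) = η x := by
      simp [torusSwap, hx2 x]
    have e1 : torusSwap η x (x + 2) (x + 1) = η (x + 1) := by
      simp [torusSwap, hx1 x, hx12 x]
    rw [e1, e2, weight_swap]
  -- shift invariance of the indicator sum
  have key3 :
      ∑ x : ZMod n, ∑ η : ZMod n → Fin 2,
          (if η (x + 2) = η (x + 1) then bernoulliWeight ρ η * f η else 0) =
      ∑ x : ZMod n, ∑ η : ZMod n → Fin 2,
          (if η x = η (x + 1) then bernoulliWeight ρ η * f η else 0) := by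
    rw [Finset.sum_comm, Finset.sum_comm (γ := ZMod n)]
    refine Finset.sum_congr rfl fun η _ => ?_
    have := Equiv.sum_comp (Equiv.addRight (1 : ZMod n))
      (fun x => if η x = η (x + 1) then bernoulliWeight ρ η * f η else 0)
    rw [← this]
    refine Finset.sum_congr rfl fun x _ => ?_
    simp only [Equiv.coe_addRight]
    have h : (η (x + 2) = η (x + 1)) = (η (x + 1) = η (x + 1 + 1)) := by
      rw [show x + 1 + 1 = x + 2 from by ring]
      exact propext ⟨Eq.symm, Eq.symm⟩
    simp only [h]
    exact if_congr Iff.rfl rfl rfl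
  calc
    ∑ x : ZMod n, ∑ η : ZMod n → Fin 2,
        ((bernoulliWeight ρ η * f (torusSwap η x (x + 1)) - bernoulliWeight ρ η * f η) +
          ((if η x = η (x + 1) then bernoulliWeight ρ η * f (torusSwap η x (x + 2)) else 0) -
            (if η x = η (x + 1) then bernoulliWeight ρ η * f η else 0)))
      = ∑ x : ZMod n,
          (((∑ η : ZMod n → Fin 2, bernoulliWeight ρ η * f (torusSwap η x (x + 1))) -
            ∑ η : ZMod n → Fin 2, bernoulliWeight ρ η * f η) +
          ((∑ η : ZMod n → Fin 2,
              (if η x = η (x + 1) then bernoulliWeight ρ η * f (torusSwap η x (x + 2)) else 0)) -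
            ∑ η : ZMod n → Fin 2,
              (if η x = η (x + 1) then bernoulliWeight ρ η * f η else 0))) := by
        refine Finset.sum_congr rfl fun x _ => ?_
        rw [Finset.sum_add_distrib, Finset.sum_sub_distrib, Finset.sum_sub_distrib]
    _ = ∑ x : ZMod n,
          ((∑ η : ZMod n → Fin 2,
              (if η (x + 2) = η (x + 1) then bernoulliWeight ρ η * f η else 0)) -
            ∑ η : ZMod n → Fin 2,
              (if η x = η (x + 1) then bernoulliWeight ρ η * f η else 0)) := by
        refine Finset.sum_congr rfl fun x _ => ?_
        rw [key1 x, key2 x]; ring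
    _ = 0 := by
        rw [Finset.sum_sub_distrib, key3, sub_self]
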